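/- Let Ω be a finite set and G ≤ Sym(Ω) a primitive permutation group with b(G) ≥ 2. Then the Saxl hypergraph Σ(G) is connected: for any two points of Ω there is a finite sequence of points starting at one and ending at the other in which any two consecutive points are neighbours in Σ(G). -/

import Mathlib

/-- `B` is a base for the permutation group `G ≤ Sym(Ω)`: its pointwise
stabiliser in `G` is trivial. -/
def IsBase {Ω : Type*} (G : Subgroup (Equiv.Perm Ω)) (B : Set Ω) : Prop :=
  ∀ g ∈ G, (∀ b ∈ B, g b = b) → g = 1

/-- The base size `b(G)`: the minimum cardinality of a base for `G`. -/
noncomputable def baseSize {Ω : Type*} (G : Subgroup (Equiv.Perm Ω)) : ℕ :=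
  sInf {n | ∃ B : Set Ω, IsBase G B ∧ B.ncard = n}

/-- `E` is an edge of the Saxl hypergraph `Σ(G)`: a base for `G` of size
`b(G)`. -/
def IsSaxlEdge {Ω : Type*} (G : Subgroup (Equiv.Perm Ω)) (E : Set Ω) : Prop :=
  IsBase G E ∧ E.ncard = baseSize G

/-- `α` and `β` are neighbours in the Saxl hypergraph `Σ(G)`: they are
distinct and some edge of `Σ(G)` contains both. -/
def SaxlAdj {Ω : Type*} (G : Subgroup (Equiv.Perm Ω)) (α β : Ω) : Prop :=
  α ≠ β ∧ ∃ E : Set Ω, IsSaxlEdge G E ∧ α ∈ E ∧ β ∈ E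

/-- `G ≤ Sym(Ω)` is primitive: transitive, and every block (a set `B` with
`gB = B` or `gB ∩ B = ∅` for all `g ∈ G`) is trivial or all of `Ω`. -/
def IsPrimitivePerm {Ω : Type*} (G : Subgroup (Equiv.Perm Ω)) : Prop :=
  (∀ α β : Ω, ∃ g ∈ G, g α = β) ∧
  ∀ B : Set Ω, (∀ g ∈ G, ⇑g '' B = B ∨ Disjoint (⇑g '' B) B) →
    B.Subsingleton ∨ B = Set.univ

lemma edge_image {Ω : Type*} (G : Subgroup (Equiv.Perm Ω)) {E : Set Ω}
    (hE : IsSaxlEdge G E) {g : Equiv.Perm Ω} (hg : g ∈ G) :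
    IsSaxlEdge G (⇑g '' E) := by
  constructor
  · intro h hh hfix
    have hk : g⁻¹ * h * g ∈ G := G.mul_mem (G.mul_mem (G.inv_mem hg) hh) hg
    have hone : g⁻¹ * h * g = 1 := by
      refine hE.1 (g⁻¹ * h * g) hk ?_
      intro b hb
      have hfb : h (g b) = g b := hfix (g b) ⟨b, hb, rfl⟩
      simp [Equiv.Perm.mul_apply, hfb]
    have : h = g * (g⁻¹ * h * g) * g⁻¹ := by group
    rw [this, hone]; group
  · rw [Set.ncard_image_of_injective _ g.injective]; exact hE.2

lemma adj_smul {Ω : Type*} (G : Subgroup (Equiv.Perm Ω)) {α β : Ω}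
    {g : Equiv.Perm Ω} (hg : g ∈ G) (h : SaxlAdj G α β) :
    SaxlAdj G (g α) (g β) := by
  obtain ⟨hne, E, hE, hα, hβ⟩ := h
  exact ⟨fun e => hne (g.injective e), ⇑g '' E, edge_image G hE hg,
    ⟨α, hα, rfl⟩, ⟨β, hβ, rfl⟩⟩

lemma adj_symm {Ω : Type*} (G : Subgroup (Equiv.Perm Ω)) :
    Symmetric (SaxlAdj G) := by
  rintro a b ⟨hne, E, hE, ha, hb⟩
  exact ⟨hne.symm, E, hE, hb, ha⟩

/-- The Saxl hypergraph of a primitive group with `b(G) ≥ 2` is connected. -/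
theorem statement_4 {Ω : Type*} [Fintype Ω] (G : Subgroup (Equiv.Perm Ω))
    (hprim : IsPrimitivePerm G) (hb : 2 ≤ baseSize G) :
    ∀ α β : Ω, Relation.ReflTransGen (SaxlAdj G) α β := by
  classical
  intro α β
  set R := Relation.ReflTransGen (SaxlAdj G) with hR
  have Rsymm : Symmetric R := by
    haveI : Std.Symm (SaxlAdj G) := ⟨fun a b h => adj_symm G h⟩
    exact fun x y h => Std.Symm.symm x y h
  have Rsmul : ∀ {g : Equiv.Perm Ω}, g ∈ G → ∀ {x y : Ω}, R x y → R (g x) (g y) := by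
    intro g hg x y hxy
    exact Relation.ReflTransGen.lift g (fun a b hab => adj_smul G hg hab) x y hxy
  -- existence of an edge
  have hmem : baseSize G ∈ {n | ∃ B : Set Ω, IsBase G B ∧ B.ncard = n} := by
    apply Nat.sInf_mem
    refine ⟨(Set.univ : Set Ω).ncard, Set.univ, ?_, rfl⟩
    intro g _ hfix
    ext x
    exact hfix x (Set.mem_univ x) ▸ (hfix x (Set.mem_univ x))
  obtain ⟨E₀, hE₀b, hE₀n⟩ := hmem
  have hE₀ : IsSaxlEdge G E₀ := ⟨hE₀b, hE₀n⟩
  have hE₀ne : E₀.Nonempty := by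
    rw [← Set.ncard_pos (Set.toFinite E₀)] at *
    omega
  set B := {z | R α z} with hB
  have hαB : α ∈ B := Relation.ReflTransGen.refl
  have hblock : ∀ g ∈ G, ⇑g '' B = B ∨ Disjoint (⇑g '' B) B := by
    intro g hg
    by_cases hdis : Disjoint (⇑g '' B) B
    · exact Or.inr hdis
    left
    rw [Set.not_disjoint_iff] at hdis
    obtain ⟨x, ⟨y, hy, rfl⟩, hgyB⟩ := hdis
    have h1 : R (g α) (g y) := Rsmul hg hy
    have h2 : R α (g y) := hgyB
    have hαgα : R α (g α) := h2.trans (Rsymm h1)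
    ext z
    constructor
    · rintro ⟨w, hw, rfl⟩
      exact hαgα.trans (Rsmul hg hw)
    · intro hz
      refine ⟨g⁻¹ z, ?_, by simp⟩
      have : R (g α) z := (Rsymm hαgα).trans hz
      have := Rsmul (G.inv_mem hg) this
      exact (show R α (g⁻¹ z) by simpa using this)
  rcases hprim.2 B hblock with hsub | huniv
  · -- B is subsingleton: contradiction since α has a neighbour
    exfalso
    obtain ⟨γ, hγ⟩ := hE₀ne
    obtain ⟨g, hg, hgγ⟩ := hprim.1 γ α
    have hEdge : IsSaxlEdge G (⇑g '' E₀) := edge_image G hE₀ hg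
    have hαE : α ∈ ⇑g '' E₀ := ⟨γ, hγ, hgγ⟩
    have : ∃ δ ∈ ⇑g '' E₀, δ ≠ α := by
      by_contra hcon
      push_neg at hcon
      have hsubs : ⇑g '' E₀ ⊆ {α} := fun x hx => hcon x hx
      have := Set.ncard_le_ncard hsubs (Set.finite_singleton α)
      rw [Set.ncard_singleton, hEdge.2] at this
      omega
    obtain ⟨δ, hδE, hδne⟩ := this
    have hadj : SaxlAdj G α δ := ⟨fun e => hδne e.symm, _, hEdge, hαE, hδE⟩
    have hδB : δ ∈ B := Relation.ReflTransGen.single hadj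
    exact hδne (hsub hδB hαB)
  · have : β ∈ B := huniv ▸ Set.mem_univ β
    exact this
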